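/- Let A^1, ..., A^N ⊂ ℝ be compact intervals, let u : ∏_{i=1}^N A^i → ℝ be bounded and continuous, let η > 0 and D ≥ 1. Let Δ_D be the set of N-tuples π = (π^1, ..., π^N) where each π^i is a Borel probability measure on A^i that is absolutely continuous with class-D density p^i. Then the function V_η(π) = −[ ∫ u d(π^1 ⊗ ⋯ ⊗ π^N) + η ∑_{i=1}^N ν(p^i) ] is continuous on Δ_D with respect to the metric d(π, π') = max_{i=1,...,N} ‖π^i − π'^i‖_BL. -/

import Mathlib

open MeasureTheory Set

lemma contOn_of_lip {a b D : ℝ} (hD : 0 ≤ D) {p : ℝ → ℝ}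
    (h : ∀ x ∈ Icc a b, ∀ y ∈ Icc a b, |p x - p y| ≤ D * |x - y|) :
    ContinuousOn p (Icc a b) := by
  refine (LipschitzOnWith.of_dist_le_mul (K := D.toNNReal) ?_).continuousOn
  intro x hx y hy
  rw [Real.dist_eq, Real.dist_eq, Real.coe_toNNReal _ hD]
  exact h x hx y hy

lemma prod_diff_le {ι : Type*} (s : Finset ι) (f g : ι → ℝ) (D e : ℝ) (hD : 1 ≤ D) (he : 0 ≤ e)
    (hf : ∀ i ∈ s, |f i| ≤ D) (hg : ∀ i ∈ s, |g i| ≤ D) (hfg : ∀ i ∈ s, |f i - g i| ≤ e) :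
    |∏ i ∈ s, f i - ∏ i ∈ s, g i| ≤ s.card * D ^ s.card * e := by
  induction s using Finset.cons_induction with
  | empty => simp
  | cons a s ha ih =>
    have hf' := fun i hi => hf i (Finset.mem_cons_of_mem hi)
    have hg' := fun i hi => hg i (Finset.mem_cons_of_mem hi)
    have hfg' := fun i hi => hfg i (Finset.mem_cons_of_mem hi)
    have hQ : |∏ i ∈ s, g i| ≤ D ^ s.card := by
      rw [Finset.abs_prod]
      calc ∏ i ∈ s, |g i| ≤ ∏ _i ∈ s, D :=
            Finset.prod_le_prod (fun i _ => abs_nonneg _) hg'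
        _ = D ^ s.card := Finset.prod_const D
    have hIH := ih hf' hg' hfg'
    have hfa := hf a (Finset.mem_cons_self a s)
    have hfga := hfg a (Finset.mem_cons_self a s)
    rw [Finset.prod_cons, Finset.prod_cons, Finset.card_cons]
    have key : |f a * ∏ i ∈ s, f i - g a * ∏ i ∈ s, g i|
        ≤ |f a| * |∏ i ∈ s, f i - ∏ i ∈ s, g i| + |f a - g a| * |∏ i ∈ s, g i| := by
      calc |f a * ∏ i ∈ s, f i - g a * ∏ i ∈ s, g i|
          = |f a * (∏ i ∈ s, f i - ∏ i ∈ s, g i) + (f a - g a) * ∏ i ∈ s, g i| := by ring_nf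
        _ ≤ |f a * (∏ i ∈ s, f i - ∏ i ∈ s, g i)| + |(f a - g a) * ∏ i ∈ s, g i| := abs_add_le _ _
        _ = |f a| * |∏ i ∈ s, f i - ∏ i ∈ s, g i| + |f a - g a| * |∏ i ∈ s, g i| := by
            rw [abs_mul, abs_mul]
    have hD0 : (0:ℝ) ≤ D := le_trans zero_le_one hD
    have hDn : D ^ s.card ≤ D ^ (s.card + 1) := by
      calc D ^ s.card = 1 * D ^ s.card := (one_mul _).symm
        _ ≤ D * D ^ s.card := by
            apply mul_le_mul_of_nonneg_right hD (by positivity)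
        _ = D ^ (s.card + 1) := (pow_succ' D s.card).symm
    push_cast
    have h1 : |f a| * |∏ i ∈ s, f i - ∏ i ∈ s, g i| ≤ D * (s.card * D ^ s.card * e) :=
      mul_le_mul hfa hIH (abs_nonneg _) hD0
    have h2 : |f a - g a| * |∏ i ∈ s, g i| ≤ e * D ^ s.card :=
      mul_le_mul hfga hQ (abs_nonneg _) he
    have h3 : e * D ^ s.card ≤ e * D ^ (s.card + 1) := mul_le_mul_of_nonneg_left hDn he
    have h4 : D * ((s.card : ℝ) * D ^ s.card * e) = (s.card : ℝ) * D ^ (s.card + 1) * e := by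
      rw [pow_succ' D s.card]; ring
    calc |f a * ∏ i ∈ s, f i - g a * ∏ i ∈ s, g i|
        ≤ D * (s.card * D ^ s.card * e) + e * D ^ s.card := by linarith
      _ ≤ (s.card : ℝ) * D ^ (s.card + 1) * e + e * D ^ (s.card + 1) := by linarith
      _ = ((s.card : ℝ) + 1) * D ^ (s.card + 1) * e := by ring

lemma phi_lip {D x y : ℝ} (hD : 1 ≤ D) (hx1 : D⁻¹ ≤ x) (hx2 : x ≤ D)
    (hy1 : D⁻¹ ≤ y) (hy2 : y ≤ D) :
    |x * Real.log x - y * Real.log y| ≤ (Real.log D + D^2) * |x - y| := by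
  have hD0 : (0:ℝ) < D := lt_of_lt_of_le one_pos hD
  have hDi : (0:ℝ) < D⁻¹ := by positivity
  have hx0 : 0 < x := lt_of_lt_of_le hDi hx1
  have hy0 : 0 < y := lt_of_lt_of_le hDi hy1
  have hlogD : 0 ≤ Real.log D := Real.log_nonneg hD
  have habslog : ∀ z : ℝ, D⁻¹ ≤ z → z ≤ D → |Real.log z| ≤ Real.log D := by
    intro z h1 h2
    have hz0 : 0 < z := lt_of_lt_of_le hDi h1
    rw [abs_le]
    constructor
    · have := Real.log_le_log hDi h1
      rwa [Real.log_inv] at this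
    · exact Real.log_le_log hz0 h2
  have hloglip : ∀ u v : ℝ, D⁻¹ ≤ u → u ≤ D → D⁻¹ ≤ v → v ≤ D → v ≤ u →
      Real.log u - Real.log v ≤ D * (u - v) := by
    intro u v h1 h2 h3 h4 hvu
    have hu0 : 0 < u := lt_of_lt_of_le hDi h1
    have hv0 : 0 < v := lt_of_lt_of_le hDi h3
    have e1 : Real.log u - Real.log v = Real.log (u / v) :=
      (Real.log_div (ne_of_gt hu0) (ne_of_gt hv0)).symm
    have e2 : Real.log (u / v) ≤ u / v - 1 := Real.log_le_sub_one_of_pos (by positivity)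
    have e3 : u / v - 1 = (u - v) / v := by field_simp
    have e4 : (u - v) / v ≤ D * (u - v) := by
      rw [div_le_iff₀ hv0]
      have h5 : 1 ≤ D * v := by
        have := mul_le_mul_of_nonneg_left h3 hD0.le
        rwa [mul_inv_cancel₀ (ne_of_gt hD0)] at this
      nlinarith
    linarith [e1 ▸ le_trans e2 (le_of_eq e3) |>.trans e4]
  have hlogabs : |Real.log x - Real.log y| ≤ D * |x - y| := by
    rcases le_total y x with h | h
    · rw [abs_of_nonneg (sub_nonneg.2 (Real.log_le_log hy0 h)),
        abs_of_nonneg (sub_nonneg.2 h)]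
      exact hloglip x y hx1 hx2 hy1 hy2 h
    · rw [abs_of_nonpos (sub_nonpos.2 (Real.log_le_log hx0 h)),
        abs_of_nonpos (sub_nonpos.2 h)]
      have := hloglip y x hy1 hy2 hx1 hx2 h
      linarith
  have decomp : x * Real.log x - y * Real.log y
      = (x - y) * Real.log x + y * (Real.log x - Real.log y) := by ring
  calc |x * Real.log x - y * Real.log y|
      ≤ |(x - y) * Real.log x| + |y * (Real.log x - Real.log y)| := by
        rw [decomp]; exact abs_add_le _ _
    _ = |x - y| * |Real.log x| + |y| * |Real.log x - Real.log y| := by rw [abs_mul, abs_mul]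
    _ ≤ |x - y| * Real.log D + D * (D * |x - y|) := by
        have h1 := habslog x hx1 hx2
        have h2 : |y| ≤ D := by rw [abs_of_pos hy0]; exact hy2
        have h3 : |y| * |Real.log x - Real.log y| ≤ D * (D * |x - y|) :=
          mul_le_mul h2 hlogabs (abs_nonneg _) hD0.le
        nlinarith [abs_nonneg (x - y)]
    _ = (Real.log D + D^2) * |x - y| := by ring

/-- A test function for the bounded Lipschitz norm on the interval `[a, b]`. -/
def IsBLTestOn (a b : ℝ) (g : ℝ → ℝ) : Prop :=
  ∃ c L : ℝ, 0 ≤ c ∧ 0 ≤ L ∧ c + L ≤ 1 ∧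
    (∀ x ∈ Icc a b, |g x| ≤ c) ∧
    (∀ x ∈ Icc a b, ∀ y ∈ Icc a b, |g x - g y| ≤ L * |x - y|)

/-- The bounded Lipschitz norm `‖P - Q‖_BL` of the difference of the measures
`P`, `Q` on `[a,b]` with Lebesgue densities `p`, `q`. -/
noncomputable def blNormDiff (a b : ℝ) (p q : ℝ → ℝ) : ℝ :=
  sSup {r : ℝ | ∃ g : ℝ → ℝ, IsBLTestOn a b g ∧
    r = |∫ x in Icc a b, g x * (p x - q x)|}

/-- `p` is a class-`D` density on `[a,b]`: `D⁻¹ ≤ p ≤ D` on `[a,b]`, `p` is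
`D`-Lipschitz on `[a,b]`, and `∫_{[a,b]} p = 1`. -/
def IsClassDDensity (a b D : ℝ) (p : ℝ → ℝ) : Prop :=
  (∀ x ∈ Icc a b, D⁻¹ ≤ p x ∧ p x ≤ D) ∧
    (∀ x ∈ Icc a b, ∀ y ∈ Icc a b, |p x - p y| ≤ D * |x - y|) ∧
    (∫ x in Icc a b, p x) = 1

lemma length_lb {a b D : ℝ} (hD : 1 ≤ D) {p : ℝ → ℝ} (hp : IsClassDDensity a b D p) :
    1 ≤ D * (b - a) := by
  obtain ⟨hb, hlip, hint⟩ := hp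
  have hD0 : (0:ℝ) < D := lt_of_lt_of_le one_pos hD
  rcases le_or_gt a b with hab | hab
  · have hpc : ContinuousOn p (Icc a b) := contOn_of_lip hD0.le hlip
    have hInt : IntegrableOn p (Icc a b) := hpc.integrableOn_Icc
    have h1 : (∫ x in Icc a b, p x) ≤ ∫ _x in Icc a b, D := by
      refine setIntegral_mono_on hInt ?_ measurableSet_Icc (fun x hx => (hb x hx).2)
      exact integrableOn_const measure_Icc_lt_top.ne
    rw [hint, setIntegral_const, measureReal_def, Real.volume_Icc,
      ENNReal.toReal_ofReal (sub_nonneg.2 hab), smul_eq_mul] at h1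
    linarith
  · rw [Set.Icc_eq_empty (not_le.2 hab)] at hint
    simp at hint

set_option maxHeartbeats 1000000 in
lemma sup_bound {a b D : ℝ} (hD : 1 ≤ D) {p q : ℝ → ℝ}
    (hp : IsClassDDensity a b D p) (hq : IsClassDDensity a b D q)
    {ε : ℝ} (hε : 0 < ε) (hε1 : ε ≤ 1)
    (hbl : blNormDiff a b p q < ε^3/(256*D^2)) :
    ∀ x ∈ Icc a b, |p x - q x| < ε := by
  by_contra hcon
  push_neg at hcon
  obtain ⟨x₀, hx₀, hx₀ε⟩ := hcon
  have hD0 : (0:ℝ) < D := lt_of_lt_of_le one_pos hD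
  have hlen : 1 ≤ D * (b - a) := length_lb hD hp
  have hba : 1/D ≤ b - a := by rw [div_le_iff₀ hD0]; linarith
  have hab : a ≤ b := by nlinarith
  obtain ⟨r, hrdef⟩ : ∃ r : ℝ, r = ε/(4*D) := ⟨_, rfl⟩
  have hr0 : 0 < r := by rw [hrdef]; positivity
  have hre : r * (4*D) = ε := by rw [hrdef]; field_simp
  have hr14 : r ≤ 1/(4*D) := by
    rw [hrdef, div_le_div_iff₀ (by positivity) (by positivity)]; nlinarith
  have hr4 : r ≤ 1/4 := by
    refine le_trans hr14 ?_
    rw [div_le_div_iff₀ (by positivity) (by norm_num)]; linarith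
  have hrb : r/2 ≤ b - a := by
    have : 1/(4*D) ≤ 1/D := by
      rw [div_le_div_iff₀ (by positivity) hD0]; nlinarith
    linarith
  obtain ⟨f, hfdef⟩ : ∃ f : ℝ → ℝ, f = fun x => p x - q x := ⟨_, rfl⟩
  obtain ⟨s, hs⟩ : ∃ s : ℝ, s = if 0 ≤ f x₀ then 1 else -1 := ⟨_, rfl⟩
  have hfx₀ : f x₀ = p x₀ - q x₀ := by rw [hfdef]
  have hsf : ε ≤ s * f x₀ := by
    rcases le_or_gt 0 (f x₀) with h | h
    · rw [hs, if_pos h, one_mul]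
      rw [hfx₀] at h ⊢
      rwa [abs_of_nonneg h] at hx₀ε
    · rw [hs, if_neg (not_le.2 h)]
      rw [hfx₀] at h
      rw [abs_of_neg h] at hx₀ε
      rw [hfx₀]; linarith
  have hs1 : |s| = 1 := by rw [hs]; split_ifs <;> simp
  have hflip : ∀ x ∈ Icc a b, ∀ y ∈ Icc a b, |f x - f y| ≤ 2*D*|x - y| := by
    intro x hx y hy
    have h1 := hp.2.1 x hx y hy
    have h2 := hq.2.1 x hx y hy
    calc |f x - f y| = |(p x - p y) - (q x - q y)| := by rw [hfdef]; ring_nf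
      _ ≤ |p x - p y| + |q x - q y| := abs_sub _ _
      _ ≤ 2*D*|x - y| := by linarith
  obtain ⟨g, hg⟩ : ∃ g : ℝ → ℝ, g = fun x => s * (r/2) * max 0 (1 - |x - x₀|/r) := ⟨_, rfl⟩
  have hrh : (0:ℝ) ≤ r/2 := by positivity
  have hgBL : IsBLTestOn a b g := by
    refine ⟨r/2, 1/2, by positivity, by norm_num, by linarith, ?_, ?_⟩
    · intro x _
      simp only [hg]
      have hmax0 : (0:ℝ) ≤ max 0 (1 - |x - x₀|/r) := le_max_left _ _
      have hmax1 : max 0 (1 - |x - x₀|/r) ≤ 1 := by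
        refine max_le zero_le_one ?_
        have : (0:ℝ) ≤ |x - x₀|/r := by positivity
        linarith
      calc |s * (r/2) * max 0 (1 - |x - x₀|/r)|
          = |s| * |r/2| * |max 0 (1 - |x - x₀|/r)| := by rw [abs_mul, abs_mul]
        _ = (r/2) * max 0 (1 - |x - x₀|/r) := by
            rw [hs1, one_mul, abs_of_nonneg hrh, abs_of_nonneg hmax0]
        _ ≤ (r/2) * 1 := mul_le_mul_of_nonneg_left hmax1 hrh
        _ = r/2 := mul_one _
    · intro x _ y _
      simp only [hg]
      have e : s * (r/2) * max 0 (1 - |x - x₀|/r) - s * (r/2) * max 0 (1 - |y - x₀|/r)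
          = s * (r/2) * (max 0 (1 - |x - x₀|/r) - max 0 (1 - |y - x₀|/r)) := by ring
      rw [e, abs_mul, abs_mul, hs1, one_mul, abs_of_nonneg hrh]
      have h2 : |max 0 (1 - |x - x₀|/r) - max 0 (1 - |y - x₀|/r)|
          ≤ |(1 - |x - x₀|/r) - (1 - |y - x₀|/r)| := by
        rw [max_comm 0 (1 - |x - x₀|/r), max_comm 0 (1 - |y - x₀|/r)]
        exact abs_max_sub_max_le_abs _ _ _
      have h4 : |(|y - x₀| - |x - x₀|)| ≤ |x - y| := by
        have := abs_abs_sub_abs_le_abs_sub (y - x₀) (x - x₀)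
        calc |(|y - x₀| - |x - x₀|)| ≤ |y - x₀ - (x - x₀)| := this
          _ = |x - y| := by rw [show y - x₀ - (x - x₀) = y - x by ring, abs_sub_comm]
      have h3 : |(1 - |x - x₀|/r) - (1 - |y - x₀|/r)| ≤ |x - y| / r := by
        rw [show (1 - |x - x₀|/r) - (1 - |y - x₀|/r) = (|y - x₀| - |x - x₀|)/r by ring,
          abs_div, abs_of_pos hr0]
        gcongr
      have h5 : (r/2) * (|x - y| / r) = 1/2 * |x - y| := by
        field_simp
      calc (r/2) * |max 0 (1 - |x - x₀|/r) - max 0 (1 - |y - x₀|/r)|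
          ≤ (r/2) * (|x - y| / r) := mul_le_mul_of_nonneg_left (h2.trans h3) hrh
        _ = 1/2 * |x - y| := h5
  obtain ⟨F, hF⟩ : ∃ F : ℝ → ℝ, F = fun x => g x * (p x - q x) := ⟨_, rfl⟩
  have hpc : ContinuousOn p (Icc a b) := contOn_of_lip hD0.le hp.2.1
  have hqc : ContinuousOn q (Icc a b) := contOn_of_lip hD0.le hq.2.1
  have hgc : Continuous g := by
    rw [hg]
    exact continuous_const.mul (continuous_const.max
      (continuous_const.sub (((continuous_id.sub continuous_const).abs).div_const r)))
  have hFc : ContinuousOn F (Icc a b) := by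
    rw [hF]; exact (hgc.continuousOn).mul (hpc.sub hqc)
  have hFint : IntegrableOn F (Icc a b) := hFc.integrableOn_Icc
  have hFx : ∀ x, F x = (r/2) * max 0 (1 - |x - x₀|/r) * (s * f x) := by
    intro x
    simp only [hF, hg, hfdef]
    ring
  have hsfx : ∀ x ∈ Icc a b, |x - x₀| ≤ r → ε - 2*D*|x - x₀| ≤ s * f x := by
    intro x hx _
    have h1 := hflip x hx x₀ hx₀
    have h2 : |s * f x - s * f x₀| = |f x - f x₀| := by
      rw [← mul_sub, abs_mul, hs1, one_mul]
    have h3 : -(2*D*|x - x₀|) ≤ s * f x - s * f x₀ := by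
      have := neg_abs_le (s * f x - s * f x₀)
      rw [h2] at this
      linarith
    linarith
  have hFpos : ∀ x ∈ Icc a b, 0 ≤ F x := by
    intro x hx
    rw [hFx x]
    rcases le_or_gt r |x - x₀| with h | h
    · have hm : 1 - |x - x₀|/r ≤ 0 := by
        rw [sub_nonpos, le_div_iff₀ hr0]; linarith
      rw [max_eq_left hm]
      simp
    · have hfx : ε/2 ≤ s * f x := by
        have h6 := hsfx x hx h.le
        have h2 : 2*D*|x - x₀| ≤ 2*D*r := by
          apply mul_le_mul_of_nonneg_left h.le (by positivity)
        nlinarith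
      have hmax0 : (0:ℝ) ≤ max 0 (1 - |x - x₀|/r) := le_max_left _ _
      exact mul_nonneg (mul_nonneg hrh hmax0) (by linarith)
  obtain ⟨c₁, hc₁⟩ : ∃ c₁ : ℝ, c₁ = max a (x₀ - r/2) := ⟨_, rfl⟩
  obtain ⟨c₂, hc₂⟩ : ∃ c₂ : ℝ, c₂ = min b (x₀ + r/2) := ⟨_, rfl⟩
  have hJsub : Icc c₁ c₂ ⊆ Icc a b := by
    rw [hc₁, hc₂]
    exact Icc_subset_Icc (le_max_left _ _) (min_le_left _ _)
  have hJlen : r/2 ≤ c₂ - c₁ := by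
    obtain ⟨ha', hb'⟩ := hx₀
    rw [hc₁, hc₂]
    rcases le_total a (x₀ - r/2) with h | h <;> rcases le_total (x₀ + r/2) b with h' | h'
    · rw [max_eq_right h, min_eq_right h']; linarith
    · rw [max_eq_right h, min_eq_left h']; linarith
    · rw [max_eq_left h, min_eq_right h']; linarith
    · rw [max_eq_left h, min_eq_left h']; linarith
  have hc₁₂ : c₁ ≤ c₂ := by linarith
  have hJlow : ∀ x ∈ Icc c₁ c₂, r*ε/8 ≤ F x := by
    intro x hx
    obtain ⟨h1, h2⟩ := hx
    have hxd : |x - x₀| ≤ r/2 := by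
      rw [abs_le]
      constructor
      · have h3 := le_max_right a (x₀ - r/2); rw [← hc₁] at h3; linarith
      · have h3 := min_le_right b (x₀ + r/2); rw [← hc₂] at h3; linarith
    have hxab : x ∈ Icc a b := hJsub ⟨h1, h2⟩
    have hmax : 1/2 ≤ max 0 (1 - |x - x₀|/r) := by
      refine le_max_of_le_right ?_
      have : |x - x₀|/r ≤ 1/2 := by rw [div_le_iff₀ hr0]; linarith
      linarith
    have hfx : ε/2 ≤ s * f x := by
      have h6 := hsfx x hxab (by linarith)
      have h7 : 2*D*|x - x₀| ≤ D*r := by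
        have := mul_le_mul_of_nonneg_left hxd (by positivity : (0:ℝ) ≤ 2*D)
        linarith
      nlinarith
    rw [hFx x]
    have step1 : (r/2) * (1/2) ≤ (r/2) * max 0 (1 - |x - x₀|/r) :=
      mul_le_mul_of_nonneg_left hmax hrh
    have step2 : (r/2) * (1/2) * (ε/2) ≤ (r/2) * max 0 (1 - |x - x₀|/r) * (s * f x) :=
      mul_le_mul step1 hfx (by positivity) (le_trans (by positivity) step1)
    linarith
  have hint1 : (r*ε/8) * (c₂ - c₁) ≤ ∫ x in Icc c₁ c₂, F x := by
    have h := setIntegral_mono_on (μ := volume) (s := Icc c₁ c₂)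
      (integrableOn_const measure_Icc_lt_top.ne) (hFint.mono_set hJsub)
      measurableSet_Icc hJlow
    rwa [setIntegral_const, measureReal_def, Real.volume_Icc, ENNReal.toReal_ofReal (sub_nonneg.2 hc₁₂),
      smul_eq_mul, mul_comm] at h
  have hint2 : ∫ x in Icc c₁ c₂, F x ≤ ∫ x in Icc a b, F x :=
    setIntegral_mono_set hFint ((ae_restrict_iff' measurableSet_Icc).2 (ae_of_all _ hFpos))
      (HasSubset.Subset.eventuallyLE hJsub)
  have hbound : ε^3/(256*D^2) ≤ ∫ x in Icc a b, F x := by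
    have e1 : (r*ε/8)*(r/2) = ε^3/(256*D^2) := by
      rw [hrdef]; field_simp; ring
    have e2 : (r*ε/8)*(r/2) ≤ (r*ε/8)*(c₂ - c₁) :=
      mul_le_mul_of_nonneg_left hJlen (by positivity)
    linarith
  have hmem : |∫ x in Icc a b, F x| ∈ {t : ℝ | ∃ g : ℝ → ℝ, IsBLTestOn a b g ∧
      t = |∫ x in Icc a b, g x * (p x - q x)|} := ⟨g, hgBL, by rw [hF]⟩
  have hbdd : BddAbove {t : ℝ | ∃ g : ℝ → ℝ, IsBLTestOn a b g ∧
      t = |∫ x in Icc a b, g x * (p x - q x)|} := by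
    refine ⟨2*D*(b - a), ?_⟩
    rintro t ⟨g', hg', rfl⟩
    obtain ⟨c, L, hc, hL, hcL, hgb, hglip⟩ := hg'
    have hg'c : ContinuousOn g' (Icc a b) := contOn_of_lip hL hglip
    have hbnd : ∀ x ∈ Icc a b, ‖g' x * (p x - q x)‖ ≤ 2*D := by
      intro x hx
      rw [Real.norm_eq_abs, abs_mul]
      have h1 : |g' x| ≤ 1 := le_trans (hgb x hx) (by linarith)
      have hpx := hp.1 x hx
      have hqx := hq.1 x hx
      have hDi : (0:ℝ) < D⁻¹ := by positivity
      have h2 : |p x - q x| ≤ 2*D := by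
        rw [abs_sub_le_iff]; constructor <;> nlinarith [hpx.1, hpx.2, hqx.1, hqx.2]
      calc |g' x| * |p x - q x| ≤ 1 * (2*D) :=
        mul_le_mul h1 h2 (abs_nonneg _) zero_le_one
        _ = 2*D := one_mul _
    have h := norm_setIntegral_le_of_norm_le_const (μ := volume) (s := Icc a b)
      measure_Icc_lt_top hbnd
    rw [Real.norm_eq_abs, measureReal_def, Real.volume_Icc, ENNReal.toReal_ofReal (by linarith)] at h
    exact h
  have hle : |∫ x in Icc a b, F x| ≤ blNormDiff a b p q := le_csSup hbdd hmem
  have : ε^3/(256*D^2) ≤ blNormDiff a b p q :=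
    le_trans (le_trans hbound (le_abs_self _)) hle
  linarith

/-- The candidate Lyapunov function
`V_η(π) = -[∫ u d(π¹ ⊗ ⋯ ⊗ πᴺ) + η ∑ᵢ ν(pⁱ)]`, written in terms of the
densities `p i` of the strategies `π i` on the intervals `[lo i, hi i]`:
the product-measure integral is `∫_{∏ᵢ [lo i, hi i]} u(x) ∏ᵢ pⁱ(xᵢ) dx` and
`ν(pⁱ) = -∫ pⁱ log pⁱ` is the differential entropy. -/
noncomputable def lyapunovV {N : ℕ} (lo hi : Fin N → ℝ) (η : ℝ)
    (u : (Fin N → ℝ) → ℝ) (p : Fin N → ℝ → ℝ) : ℝ :=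
  -((∫ x in Set.pi univ fun i => Icc (lo i) (hi i), u x * ∏ i, p i (x i)) +
    η * ∑ i, -∫ y in Icc (lo i) (hi i), p i y * Real.log (p i y))

set_option maxHeartbeats 1000000 in
/-- For compact intervals `A^i = [lo i, hi i]`, a bounded continuous `u` on the product
box, `η > 0` and `D ≥ 1`, the function `V_η` is continuous on the set `Δ_D` of tuples of
class-`D` densities, with respect to the metric
`d(π, π') = maxᵢ ‖πⁱ - π'ⁱ‖_BL` (stated in ε–δ form). -/
theorem stmt_8 {N : ℕ} (lo hi : Fin N → ℝ) (η D M : ℝ) (hη : 0 < η) (hD : 1 ≤ D)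
    (u : (Fin N → ℝ) → ℝ)
    (hu : ContinuousOn u (Set.pi univ fun i => Icc (lo i) (hi i)))
    (hbd : ∀ x ∈ Set.pi univ fun i => Icc (lo i) (hi i), |u x| ≤ M) :
    ∀ p : Fin N → ℝ → ℝ, (∀ i, IsClassDDensity (lo i) (hi i) D (p i)) →
      ∀ ε > 0, ∃ δ > 0, ∀ q : Fin N → ℝ → ℝ,
        (∀ i, IsClassDDensity (lo i) (hi i) D (q i)) →
        (∀ i, blNormDiff (lo i) (hi i) (p i) (q i) < δ) →
        |lyapunovV lo hi η u p - lyapunovV lo hi η u q| < ε := by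
  intro p hp ε hε
  have hD0 : (0:ℝ) < D := lt_of_lt_of_le one_pos hD
  have hDi : (0:ℝ) < D⁻¹ := by positivity
  have hlen : ∀ i, 1 ≤ D * (hi i - lo i) := fun i => length_lb hD (hp i)
  have hab : ∀ i, lo i ≤ hi i := fun i => by nlinarith [hlen i]
  have hM : 0 ≤ M :=
    le_trans (abs_nonneg _) (hbd (fun i => lo i) (fun i _ => ⟨le_refl _, hab i⟩))
  obtain ⟨Lp, hLp⟩ : ∃ L : ℝ, L = Real.log D + D^2 := ⟨_, rfl⟩
  have hLp0 : 0 ≤ Lp := by rw [hLp]; exact add_nonneg (Real.log_nonneg hD) (by positivity)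
  obtain ⟨VB, hVB⟩ : ∃ v : ℝ,
      v = (volume (Set.pi univ fun i => Icc (lo i) (hi i))).toReal := ⟨_, rfl⟩
  have hVB0 : 0 ≤ VB := by rw [hVB]; exact ENNReal.toReal_nonneg
  obtain ⟨K, hK⟩ : ∃ K : ℝ,
      K = M * (N * D^N) * VB + η * (Lp * ∑ i, (hi i - lo i)) := ⟨_, rfl⟩
  have hK0 : 0 ≤ K := by
    rw [hK]
    have hsum : 0 ≤ ∑ i, (hi i - lo i) :=
      Finset.sum_nonneg fun i _ => sub_nonneg.2 (hab i)
    have : (0:ℝ) ≤ M * (N * D^N) * VB := by positivity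
    nlinarith [mul_nonneg hLp0 hsum]
  obtain ⟨ε', hε'⟩ : ∃ e : ℝ, e = min 1 (ε / (2*(K+1))) := ⟨_, rfl⟩
  have hε'0 : 0 < ε' := by rw [hε']; exact lt_min one_pos (by positivity)
  have hε'1 : ε' ≤ 1 := by rw [hε']; exact min_le_left _ _
  refine ⟨ε'^3/(256*D^2), by positivity, ?_⟩
  intro q hq hql
  have hsup : ∀ i, ∀ y ∈ Icc (lo i) (hi i), |p i y - q i y| < ε' :=
    fun i => sup_bound hD (hp i) (hq i) hε'0 hε'1 (hql i)
  have hpc : ∀ i, ContinuousOn (p i) (Icc (lo i) (hi i)) :=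
    fun i => contOn_of_lip hD0.le (hp i).2.1
  have hqc : ∀ i, ContinuousOn (q i) (Icc (lo i) (hi i)) :=
    fun i => contOn_of_lip hD0.le (hq i).2.1
  have hboxK : IsCompact (Set.pi univ fun i => Icc (lo i) (hi i)) :=
    isCompact_univ_pi fun i => isCompact_Icc
  have hboxM : MeasurableSet (Set.pi univ fun i => Icc (lo i) (hi i)) :=
    hboxK.isClosed.measurableSet
  have hvolbox : volume (Set.pi univ fun i => Icc (lo i) (hi i)) < ⊤ := hboxK.measure_lt_top
  have hprodc : ∀ (f : Fin N → ℝ → ℝ), (∀ i, ContinuousOn (f i) (Icc (lo i) (hi i))) →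
      ContinuousOn (fun x : Fin N → ℝ => ∏ i, f i (x i))
        (Set.pi univ fun i => Icc (lo i) (hi i)) := by
    intro f hf
    apply continuousOn_finset_prod
    intro i _
    exact (hf i).comp (continuous_apply i).continuousOn (fun x hx => hx i (mem_univ i))
  have hPc : ContinuousOn (fun x : Fin N → ℝ => u x * ∏ i, p i (x i))
      (Set.pi univ fun i => Icc (lo i) (hi i)) := hu.mul (hprodc p hpc)
  have hQc : ContinuousOn (fun x : Fin N → ℝ => u x * ∏ i, q i (x i))
      (Set.pi univ fun i => Icc (lo i) (hi i)) := hu.mul (hprodc q hqc)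
  have hIntP : IntegrableOn (fun x : Fin N → ℝ => u x * ∏ i, p i (x i))
      (Set.pi univ fun i => Icc (lo i) (hi i)) := hPc.integrableOn_compact hboxK
  have hIntQ : IntegrableOn (fun x : Fin N → ℝ => u x * ∏ i, q i (x i))
      (Set.pi univ fun i => Icc (lo i) (hi i)) := hQc.integrableOn_compact hboxK
  -- Term A
  have hA : |(∫ x in Set.pi univ fun i => Icc (lo i) (hi i), u x * ∏ i, p i (x i)) -
      ∫ x in Set.pi univ fun i => Icc (lo i) (hi i), u x * ∏ i, q i (x i)|
      ≤ M * (N * D^N) * ε' * VB := by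
    rw [← integral_sub hIntP hIntQ]
    have hbnd : ∀ x ∈ Set.pi univ fun i => Icc (lo i) (hi i),
        ‖u x * ∏ i, p i (x i) - u x * ∏ i, q i (x i)‖ ≤ M * (N * D^N * ε') := by
      intro x hx
      rw [Real.norm_eq_abs, ← mul_sub, abs_mul]
      have hprod : |∏ i, p i (x i) - ∏ i, q i (x i)| ≤ N * D^N * ε' := by
        have := prod_diff_le Finset.univ (fun i => p i (x i)) (fun i => q i (x i)) D ε'
          hD hε'0.le
          (fun i _ => by
            have h := (hp i).1 (x i) (hx i (mem_univ i))
            rw [abs_le]; constructor <;> nlinarith [h.1, h.2])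
          (fun i _ => by
            have h := (hq i).1 (x i) (hx i (mem_univ i))
            rw [abs_le]; constructor <;> nlinarith [h.1, h.2])
          (fun i _ => (hsup i (x i) (hx i (mem_univ i))).le)
        simpa [Finset.card_univ] using this
      exact mul_le_mul (hbd x hx) hprod (abs_nonneg _) hM
    have h := norm_setIntegral_le_of_norm_le_const (μ := volume)
      (s := Set.pi univ fun i => Icc (lo i) (hi i)) hvolbox hbnd
    rw [Real.norm_eq_abs, measureReal_def, ← hVB] at h
    calc |∫ x in Set.pi univ fun i => Icc (lo i) (hi i),
          (u x * ∏ i, p i (x i) - u x * ∏ i, q i (x i))| ≤ M * (N * D^N * ε') * VB := h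
      _ = M * (N * D^N) * ε' * VB := by ring
  -- Term B
  have hB : ∀ i, |(∫ y in Icc (lo i) (hi i), p i y * Real.log (p i y)) -
      ∫ y in Icc (lo i) (hi i), q i y * Real.log (q i y)| ≤ Lp * ε' * (hi i - lo i) := by
    intro i
    have hplog : ContinuousOn (fun y => p i y * Real.log (p i y)) (Icc (lo i) (hi i)) := by
      refine (hpc i).mul (Real.continuousOn_log.comp (hpc i) ?_)
      intro y hy
      have := ((hp i).1 y hy).1
      simp only [mem_compl_iff, mem_singleton_iff]
      intro h0; rw [h0] at this; linarith
    have hqlog : ContinuousOn (fun y => q i y * Real.log (q i y)) (Icc (lo i) (hi i)) := by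
      refine (hqc i).mul (Real.continuousOn_log.comp (hqc i) ?_)
      intro y hy
      have := ((hq i).1 y hy).1
      simp only [mem_compl_iff, mem_singleton_iff]
      intro h0; rw [h0] at this; linarith
    rw [← integral_sub hplog.integrableOn_Icc hqlog.integrableOn_Icc]
    have hbnd : ∀ y ∈ Icc (lo i) (hi i),
        ‖p i y * Real.log (p i y) - q i y * Real.log (q i y)‖ ≤ Lp * ε' := by
      intro y hy
      rw [Real.norm_eq_abs]
      have h1 := (hp i).1 y hy
      have h2 := (hq i).1 y hy
      have h3 := phi_lip hD h1.1 h1.2 h2.1 h2.2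
      have h4 : |p i y - q i y| ≤ ε' := (hsup i y hy).le
      calc |p i y * Real.log (p i y) - q i y * Real.log (q i y)|
          ≤ (Real.log D + D^2) * |p i y - q i y| := h3
        _ ≤ (Real.log D + D^2) * ε' := by
            exact mul_le_mul_of_nonneg_left h4
              (add_nonneg (Real.log_nonneg hD) (by positivity))
        _ = Lp * ε' := by rw [hLp]
    have h := norm_setIntegral_le_of_norm_le_const (μ := volume) (s := Icc (lo i) (hi i))
      measure_Icc_lt_top hbnd
    rw [Real.norm_eq_abs, measureReal_def, Real.volume_Icc, ENNReal.toReal_ofReal (sub_nonneg.2 (hab i))] at h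
    exact h
  -- combine
  have hdiff : lyapunovV lo hi η u p - lyapunovV lo hi η u q
      = ((∫ x in Set.pi univ fun i => Icc (lo i) (hi i), u x * ∏ i, q i (x i)) -
          ∫ x in Set.pi univ fun i => Icc (lo i) (hi i), u x * ∏ i, p i (x i)) +
        η * ∑ i, ((∫ y in Icc (lo i) (hi i), p i y * Real.log (p i y)) -
          ∫ y in Icc (lo i) (hi i), q i y * Real.log (q i y)) := by
    simp only [lyapunovV, Finset.sum_neg_distrib, Finset.sum_sub_distrib]
    ring
  have hsumB : |∑ i, ((∫ y in Icc (lo i) (hi i), p i y * Real.log (p i y)) -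
      ∫ y in Icc (lo i) (hi i), q i y * Real.log (q i y))| ≤ Lp * ε' * ∑ i, (hi i - lo i) := by
    calc |∑ i, ((∫ y in Icc (lo i) (hi i), p i y * Real.log (p i y)) -
          ∫ y in Icc (lo i) (hi i), q i y * Real.log (q i y))|
        ≤ ∑ i, |(∫ y in Icc (lo i) (hi i), p i y * Real.log (p i y)) -
          ∫ y in Icc (lo i) (hi i), q i y * Real.log (q i y)| :=
          Finset.abs_sum_le_sum_abs _ _
      _ ≤ ∑ i, Lp * ε' * (hi i - lo i) := Finset.sum_le_sum fun i _ => hB i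
      _ = Lp * ε' * ∑ i, (hi i - lo i) := by rw [← Finset.mul_sum]
  have htot : |lyapunovV lo hi η u p - lyapunovV lo hi η u q| ≤ ε' * K := by
    rw [hdiff]
    calc |((∫ x in Set.pi univ fun i => Icc (lo i) (hi i), u x * ∏ i, q i (x i)) -
          ∫ x in Set.pi univ fun i => Icc (lo i) (hi i), u x * ∏ i, p i (x i)) +
        η * ∑ i, ((∫ y in Icc (lo i) (hi i), p i y * Real.log (p i y)) -
          ∫ y in Icc (lo i) (hi i), q i y * Real.log (q i y))|
        ≤ |(∫ x in Set.pi univ fun i => Icc (lo i) (hi i), u x * ∏ i, q i (x i)) -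
          ∫ x in Set.pi univ fun i => Icc (lo i) (hi i), u x * ∏ i, p i (x i)| +
          |η * ∑ i, ((∫ y in Icc (lo i) (hi i), p i y * Real.log (p i y)) -
          ∫ y in Icc (lo i) (hi i), q i y * Real.log (q i y))| := abs_add_le _ _
      _ ≤ M * (N * D^N) * ε' * VB + η * (Lp * ε' * ∑ i, (hi i - lo i)) := by
          have h1 : |(∫ x in Set.pi univ fun i => Icc (lo i) (hi i), u x * ∏ i, q i (x i)) -
              ∫ x in Set.pi univ fun i => Icc (lo i) (hi i), u x * ∏ i, p i (x i)|
              ≤ M * (N * D^N) * ε' * VB := by rw [abs_sub_comm]; exact hA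
          have h2 : |η * ∑ i, ((∫ y in Icc (lo i) (hi i), p i y * Real.log (p i y)) -
              ∫ y in Icc (lo i) (hi i), q i y * Real.log (q i y))|
              ≤ η * (Lp * ε' * ∑ i, (hi i - lo i)) := by
            rw [abs_mul, abs_of_pos hη]
            exact mul_le_mul_of_nonneg_left hsumB hη.le
          linarith
      _ = ε' * K := by rw [hK]; ring
  have hfin : ε' * K < ε := by
    have h1 : ε' ≤ ε / (2*(K+1)) := by rw [hε']; exact min_le_right _ _
    have h2 : ε' * K ≤ (ε / (2*(K+1))) * K := mul_le_mul_of_nonneg_right h1 hK0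
    have h3 : (ε / (2*(K+1))) * K < ε := by
      rw [div_mul_eq_mul_div, div_lt_iff₀ (by positivity)]
      nlinarith
    linarith
  linarith [htot, hfin]
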